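/- Let G be a Roelcke precompact topological group with a basis of open subgroups at the identity, and let V ≤ G be an open subgroup. Then V has finite index in its commensurator Comm_G(V). -/

import Mathlib

open Pointwise

/-- A topological group is Roelcke precompact if for every neighborhood `U` of the identity
there is a finite set `F` with `G = U F U`. -/
def RoelckePrecompact (G : Type*) [Group G] [TopologicalSpace G] : Prop :=
  ∀ U ∈ nhds (1 : G), ∃ F : Finset G, U * (F : Set G) * U = Set.univ

/-- In a Roelcke precompact group with a basis of open subgroups at the identity, every open
subgroup has finite index in its commensurator. -/
theorem relindex_commensurator_ne_zero {G : Type*} [Group G] [TopologicalSpace G]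
    [IsTopologicalGroup G]
    (hbasis : ∀ U ∈ nhds (1 : G), ∃ W : Subgroup G, IsOpen (W : Set G) ∧ (W : Set G) ⊆ U)
    (hG : RoelckePrecompact G)
    (V : Subgroup G) (hV : IsOpen (V : Set G)) :
    V.relIndex (Subgroup.Commensurable.commensurator V) ≠ 0 := by
  classical
  set C := Subgroup.Commensurable.commensurator V with hCdef
  have hVC : ∀ v ∈ V, v ∈ C := by
    intro v hv
    rw [hCdef, Subgroup.Commensurable.commensurator_mem_iff]
    have hfix : ConjAct.toConjAct v • V = V := by
      ext x
      rw [Subgroup.mem_pointwise_smul_iff_inv_smul_mem, ← ConjAct.toConjAct_inv,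
        ConjAct.toConjAct_smul, inv_inv]
      constructor
      · intro h
        have := V.mul_mem (V.mul_mem hv h) (V.inv_mem hv)
        simpa [mul_assoc] using this
      · intro h
        exact V.mul_mem (V.mul_mem (V.inv_mem hv) h) hv
    rw [hfix]
  -- Roelcke precompactness applied to V
  have hVn : (V : Set G) ∈ nhds (1 : G) := hV.mem_nhds V.one_mem
  obtain ⟨F, hF⟩ := hG _ hVn
  -- Key claim: for each f, there is a finite subset of C covering C ∩ V f V by left cosets of V
  have claim : ∀ f : G, ∃ S : Finset G, (↑S : Set G) ⊆ (C : Set G) ∧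
      ∀ g ∈ (C : Set G) ∩ ((V : Set G) * ({f} : Set G) * (V : Set G)),
        ∃ s ∈ S, s⁻¹ * g ∈ V := by
    intro f
    by_cases hne : ((C : Set G) ∩ ((V : Set G) * ({f} : Set G) * (V : Set G))).Nonempty
    · obtain ⟨g₀, hg₀C, hg₀f⟩ := hne
      set K := (ConjAct.toConjAct g₀ • V).subgroupOf V with hKdef
      have hrel : K.index ≠ 0 :=
        ((Subgroup.Commensurable.commensurator_mem_iff V g₀).mp hg₀C).1
      have hfin : Finite (V ⧸ K) := by
        rw [Subgroup.index] at hrel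
        exact (Nat.card_ne_zero.mp hrel).2
      have hRfin : (Set.range (fun q : V ⧸ K => ((Quotient.out q : V) : G) * g₀)).Finite :=
        Set.finite_range _
      refine ⟨hRfin.toFinset, ?_, ?_⟩
      · intro x hx
        rw [Set.Finite.coe_toFinset] at hx
        obtain ⟨q, rfl⟩ := hx
        exact C.mul_mem (hVC _ (Quotient.out q).2) hg₀C
      · rintro g ⟨hgC, hgf⟩
        -- decompose g₀ = u * f * w and g = a * f * b
        obtain ⟨y, hy, w, hw, hyw⟩ := hg₀f
        obtain ⟨u, hu, f', hf', huf⟩ := hy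
        rw [Set.mem_singleton_iff] at hf'
        subst hf'
        obtain ⟨z, hz, b, hb, hzb⟩ := hgf
        obtain ⟨a, ha, f'', hf'', haf⟩ := hz
        rw [Set.mem_singleton_iff] at hf''
        subst hf''
        -- g = (a * u⁻¹) * g₀ * (w⁻¹ * b)
        have hg_eq : g = (a * u⁻¹) * g₀ * (w⁻¹ * b) := by
          rw [← hyw, ← huf, ← hzb, ← haf]
          group
        have hv₁ : a * u⁻¹ ∈ V := V.mul_mem ha (V.inv_mem hu)
        have hv₂ : w⁻¹ * b ∈ V := V.mul_mem (V.inv_mem hw) hb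
        set v₁ : V := ⟨a * u⁻¹, hv₁⟩ with hv₁def
        set r : V := Quotient.out (QuotientGroup.mk v₁ : V ⧸ K) with hrdef
        refine ⟨(r : G) * g₀, ?_, ?_⟩
        · rw [Set.Finite.mem_toFinset]
          exact ⟨QuotientGroup.mk v₁, rfl⟩
        · -- r⁻¹ * v₁ ∈ K
          have hout : (QuotientGroup.mk r : V ⧸ K) = QuotientGroup.mk v₁ := by
            rw [hrdef, QuotientGroup.out_eq']
          have hK : r⁻¹ * v₁ ∈ K := (QuotientGroup.eq).mp hout
          rw [hKdef, Subgroup.mem_subgroupOf] at hK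
          have hK' : (ConjAct.toConjAct g₀)⁻¹ • ((r⁻¹ * v₁ : V) : G) ∈ V :=
            (Subgroup.mem_pointwise_smul_iff_inv_smul_mem).mp hK
          have hK'' : g₀⁻¹ * ((r : G)⁻¹ * (a * u⁻¹)) * g₀ ∈ V := by
            have : (ConjAct.toConjAct g₀)⁻¹ • ((r⁻¹ * v₁ : V) : G)
                = g₀⁻¹ * ((r : G)⁻¹ * (a * u⁻¹)) * g₀ := by
              rw [← ConjAct.toConjAct_inv, ConjAct.toConjAct_smul]
              simp [hv₁def, mul_assoc]
            rwa [this] at hK'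
          have : ((r : G) * g₀)⁻¹ * g
              = (g₀⁻¹ * ((r : G)⁻¹ * (a * u⁻¹)) * g₀) * (w⁻¹ * b) := by
            rw [hg_eq]; group
          rw [this]
          exact V.mul_mem hK'' hv₂
    · exact ⟨∅, by simp, fun g hg => absurd ⟨g, hg⟩ hne⟩
  choose Sf hSsub hScov using claim
  set S : Finset G := F.biUnion Sf with hSdef
  have hfinQ : Finite (C ⧸ V.subgroupOf C) := by
    have hSC : ∀ x ∈ S, x ∈ C := by
      intro x hx
      rw [hSdef, Finset.mem_biUnion] at hx
      obtain ⟨f, _, hxf⟩ := hx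
      exact hSsub f hxf
    refine Finite.of_surjective
      (fun s : {x : G // x ∈ S} => (QuotientGroup.mk ⟨s.1, hSC s.1 s.2⟩ : C ⧸ V.subgroupOf C)) ?_
    intro q
    obtain ⟨g, rfl⟩ := QuotientGroup.mk_surjective q
    have hg_univ : (g : G) ∈ (V : Set G) * (F : Set G) * (V : Set G) := by
      rw [hF]; trivial
    obtain ⟨y, hy, w, hw, hyw⟩ := hg_univ
    obtain ⟨u, hu, f, hf, huf⟩ := hy
    have hgf : (g : G) ∈ (C : Set G) ∩ ((V : Set G) * ({f} : Set G) * (V : Set G)) := by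
      refine ⟨g.2, ?_⟩
      exact ⟨u * f, ⟨u, hu, f, rfl, rfl⟩, w, hw, by rw [← hyw, ← huf]⟩
    obtain ⟨s, hsS, hsg⟩ := hScov f (g : G) hgf
    have hsS' : s ∈ S := by
      rw [hSdef, Finset.mem_biUnion]
      exact ⟨f, hf, hsS⟩
    refine ⟨⟨s, hsS'⟩, ?_⟩
    rw [QuotientGroup.eq]
    rw [Subgroup.mem_subgroupOf]
    exact hsg
  rw [Subgroup.relIndex]
  exact Subgroup.index_ne_zero_of_finite
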